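/- arXiv:2105.08013 — 2 statements merged into one kernel-verified Lean document; each statement's English description precedes it below -/
import Mathlib

section
/- Suppose variable j is independent of the remaining variables under the empirical distribution, i.e., p(z) = p_{{j}}(z_j) · p_{{1,…,d}∖{j}}(z_{−j}) for all z ∈ 𝒳. Then the global uniqueness Shapley value of variable j equals the marginal empirical entropy of variable j: φ^{1:n}_j = 𝓗({j}). -/
set_option linter.unusedSectionVars false


open Finset

variable {n d : ℕ} {X : Fin d → Type} [∀ j, Fintype (X j)] [∀ j, DecidableEq (X j)]

/-- Number of subjects matching subject `t` on every variable in `u`. -/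
def cohortN (x : Fin n → ∀ j, X j) (t : Fin n) (u : Finset (Fin d)) : ℕ :=
  (Finset.univ.filter fun i => ∀ j ∈ u, x i j = x t j).card

/-- Value function `val_t(u) = -log₂(N_t(u)/n)`. -/
noncomputable def uVal (x : Fin n → ∀ j, X j) (t : Fin n) (u : Finset (Fin d)) : ℝ :=
  -Real.logb 2 ((cohortN x t u : ℝ) / n)

/-- Uniqueness Shapley value of variable `j` for subject `t`. -/
noncomputable def uShap (x : Fin n → ∀ j, X j) (t : Fin n) (j : Fin d) : ℝ :=
  (d : ℝ)⁻¹ * ∑ u ∈ ((Finset.univ : Finset (Fin d)).erase j).powerset,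
    ((d - 1).choose u.card : ℝ)⁻¹ * (uVal x t (insert j u) - uVal x t u)

/-- Global uniqueness Shapley value. -/
noncomputable def uShapGlobal (x : Fin n → ∀ j, X j) (j : Fin d) : ℝ :=
  (n : ℝ)⁻¹ * ∑ t, uShap x t j

/-- Marginal empirical probability of observing `z` on the variables in `u`. -/
noncomputable def margP (x : Fin n → ∀ j, X j) (u : Finset (Fin d))
    (z : ∀ j : u, X j.1) : ℝ :=
  ((Finset.univ.filter fun i : Fin n => ∀ j : u, x i j.1 = z j).card : ℝ) / n

/-- Empirical entropy of the variables in `u` (convention `0·log₂ 0 = 0` holds automatically). -/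
noncomputable def emEnt (x : Fin n → ∀ j, X j) (u : Finset (Fin d)) : ℝ :=
  -∑ z : (∀ j : u, X j.1), margP x u z * Real.logb 2 (margP x u z)

section Aux

variable (x : Fin n → ∀ j, X j)

/-- subject `t` belongs to its own cohort, so the count is positive. -/
lemma cohortN_pos (t : Fin n) (u : Finset (Fin d)) : 0 < cohortN x t u :=
  Finset.card_pos.mpr ⟨t, by simp [cohortN]⟩

lemma n_pos (t : Fin n) : 0 < n := t.pos

/-- `cohortN` as `n * margP` at the restriction of `x t`. -/
lemma cohortN_eq_margP (t : Fin n) (u : Finset (Fin d)) :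
    (cohortN x t u : ℝ) = n * margP x u (fun k => x t k.1) := by
  have hn : (n : ℝ) ≠ 0 := Nat.cast_ne_zero.mpr (n_pos t).ne'
  have hcard : cohortN x t u
      = (Finset.univ.filter fun i : Fin n => ∀ k : u, x i k.1 = x t k.1).card := by
    unfold cohortN
    congr 1
    apply Finset.filter_congr
    intro i _
    constructor
    · intro h k; exact h k.1 k.2
    · intro h k hk; exact h ⟨k, hk⟩
  rw [hcard, margP]
  field_simp

/-- a filter of subjects by a predicate on their feature vector, counted fiberwise. -/
lemma card_filter_eq_sum (P : (∀ k, X k) → Prop) [DecidablePred P] :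
    (Finset.univ.filter fun i : Fin n => P (x i)).card
      = ∑ z ∈ Finset.univ.filter P, (Finset.univ.filter fun i : Fin n => x i = z).card := by
  rw [Finset.card_eq_sum_card_fiberwise (f := x) (t := Finset.univ.filter P)
    (by intro i hi; simp only [Finset.mem_coe, Finset.mem_filter] at hi ⊢; exact ⟨Finset.mem_univ _, hi.2⟩)]
  refine Finset.sum_congr rfl fun z hz => ?_
  congr 1
  ext i
  simp only [Finset.mem_filter, Finset.mem_univ, true_and] at hz ⊢
  constructor
  · exact fun h => h.2
  · intro h; exact ⟨h ▸ hz, h⟩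

/-- the full-joint marginal at a point equals the exact-match count over `n`. -/
lemma margP_univ_eq (z : ∀ k, X k) :
    margP x Finset.univ (fun k => z k.1)
      = ((Finset.univ.filter fun i : Fin n => x i = z).card : ℝ) / n := by
  unfold margP
  rw [Finset.filter_congr (q := fun i : Fin n => x i = z) (fun i _ => by
    constructor
    · intro h; funext k; exact h ⟨k, Finset.mem_univ k⟩
    · intro h k; rw [h])]

/-- the singleton marginal depends only on coordinate `j`. -/
lemma margP_singleton_eq (j : Fin d) (z : ∀ k, X k) :
    margP x {j} (fun k => z k.1)
      = ((Finset.univ.filter fun i : Fin n => x i j = z j).card : ℝ) / n := by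
  unfold margP
  rw [Finset.filter_congr (q := fun i : Fin n => x i j = z j) (fun i _ => by
    constructor
    · intro h; exact h ⟨j, Finset.mem_singleton_self j⟩
    · intro h k
      obtain ⟨k, hk⟩ := k
      have hk' : k = j := Finset.mem_singleton.mp hk
      subst hk'; exact h)]

/-- double counting: summing the exact-agreement-on-`erase j` counts over configurations
pinned to `x t` on `insert j u` gives the cohort count on `u`. -/
lemma sum_card_agree (t : Fin n) (j : Fin d) (u : Finset (Fin d))
    (hu : u ⊆ Finset.univ.erase j) :
    ∑ z ∈ Finset.univ.filter (fun z : ∀ k, X k => ∀ k ∈ insert j u, z k = x t k),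
        (Finset.univ.filter fun i : Fin n =>
          ∀ k : (Finset.univ.erase j : Finset (Fin d)), x i k.1 = z k.1).card
      = cohortN x t u := by
  unfold cohortN
  simp_rw [Finset.card_filter]
  rw [Finset.sum_comm]
  refine Finset.sum_congr rfl fun i _ => ?_
  rw [← Finset.card_filter, Finset.filter_filter]
  by_cases hcase : ∀ k ∈ u, x i k = x t k
  · rw [if_pos hcase]
    rw [Finset.card_eq_one]
    refine ⟨Function.update (x i) j (x t j), ?_⟩
    rw [Finset.eq_singleton_iff_unique_mem]
    constructor
    · rw [Finset.mem_filter]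
      refine ⟨Finset.mem_univ _, ?_, ?_⟩
      · intro k hk
        rcases Finset.mem_insert.mp hk with h | h
        · subst h; rw [Function.update_self]
        · have hkj : k ≠ j := (Finset.mem_erase.mp (hu h)).1
          rw [Function.update_of_ne hkj]
          exact hcase k h
      · intro k
        have hkj : k.1 ≠ j := (Finset.mem_erase.mp k.2).1
        rw [Function.update_of_ne hkj]
    · intro z hz
      rw [Finset.mem_filter] at hz
      obtain ⟨-, h1, h2⟩ := hz
      funext k
      by_cases hkj : k = j
      · subst hkj
        rw [Function.update_self]
        exact h1 k (Finset.mem_insert_self _ _)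
      · rw [Function.update_of_ne hkj]
        exact (h2 ⟨k, Finset.mem_erase.mpr ⟨hkj, Finset.mem_univ k⟩⟩).symm
  · rw [if_neg hcase, Finset.card_eq_zero, Finset.filter_eq_empty_iff]
    rintro z - ⟨h1, h2⟩
    apply hcase
    intro k hk
    have hk1 : k ∈ Finset.univ.erase j := hu hk
    calc x i k = z k := h2 ⟨k, hk1⟩
      _ = x t k := h1 k (Finset.mem_insert_of_mem hk)

/-- real-valued version of `sum_card_agree`. -/
lemma sum_margR (t : Fin n) (j : Fin d) (u : Finset (Fin d))
    (hu : u ⊆ Finset.univ.erase j) :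
    ∑ z ∈ Finset.univ.filter (fun z : ∀ k, X k => ∀ k ∈ insert j u, z k = x t k),
        margP x (Finset.univ.erase j) (fun k => z k.1)
      = (cohortN x t u : ℝ) / n := by
  unfold margP
  rw [← Finset.sum_div]
  congr 1
  rw [← Nat.cast_sum]
  exact_mod_cast congrArg Nat.cast (sum_card_agree x t j u hu)

/-- key factorization: under independence the cohort on `insert j u` factorizes. -/
lemma cohort_factor (t : Fin n) (j : Fin d)
    (hindep : ∀ z : ∀ k, X k,
      margP x Finset.univ (fun k => z k.1)
        = margP x {j} (fun k => z k.1) * margP x (Finset.univ.erase j) (fun k => z k.1))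
    (u : Finset (Fin d)) (hu : u ⊆ Finset.univ.erase j) :
    (cohortN x t (insert j u) : ℝ)
      = margP x {j} (fun k => x t k.1) * cohortN x t u := by
  have hn : (0 : ℝ) < n := by exact_mod_cast t.pos
  have h1 : cohortN x t (insert j u)
      = ∑ z ∈ Finset.univ.filter (fun z : ∀ k, X k => ∀ k ∈ insert j u, z k = x t k),
          (Finset.univ.filter fun i : Fin n => x i = z).card :=
    card_filter_eq_sum x (fun z => ∀ k ∈ insert j u, z k = x t k)
  have h2 : ∀ z ∈ Finset.univ.filter (fun z : ∀ k, X k => ∀ k ∈ insert j u, z k = x t k),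
      ((Finset.univ.filter fun i : Fin n => x i = z).card : ℝ)
        = n * (margP x {j} (fun k => x t k.1)
            * margP x (Finset.univ.erase j) (fun k => z k.1)) := by
    intro z hz
    rw [Finset.mem_filter] at hz
    have hzj : z j = x t j := hz.2 j (Finset.mem_insert_self _ _)
    have hJ : margP x {j} (fun k => z k.1) = margP x {j} (fun k => x t k.1) := by
      rw [margP_singleton_eq, margP_singleton_eq, hzj]
    have := hindep z
    rw [margP_univ_eq, hJ] at this
    field_simp at this ⊢
    linarith [this]
  calc (cohortN x t (insert j u) : ℝ)
      = ∑ z ∈ Finset.univ.filter (fun z : ∀ k, X k => ∀ k ∈ insert j u, z k = x t k),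
          ((Finset.univ.filter fun i : Fin n => x i = z).card : ℝ) := by
        rw [h1]; push_cast; ring
    _ = ∑ z ∈ Finset.univ.filter (fun z : ∀ k, X k => ∀ k ∈ insert j u, z k = x t k),
          n * (margP x {j} (fun k => x t k.1)
            * margP x (Finset.univ.erase j) (fun k => z k.1)) := Finset.sum_congr rfl h2
    _ = n * (margP x {j} (fun k => x t k.1)
          * ∑ z ∈ Finset.univ.filter (fun z : ∀ k, X k => ∀ k ∈ insert j u, z k = x t k),
              margP x (Finset.univ.erase j) (fun k => z k.1)) := by
        rw [Finset.mul_sum, Finset.mul_sum]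
    _ = n * (margP x {j} (fun k => x t k.1) * ((cohortN x t u : ℝ) / n)) := by
        rw [sum_margR x t j u hu]
    _ = margP x {j} (fun k => x t k.1) * cohortN x t u := by
        field_simp

/-- under independence the value function is additive over `insert j u`. -/
lemma uVal_insert (t : Fin n) (j : Fin d)
    (hindep : ∀ z : ∀ k, X k,
      margP x Finset.univ (fun k => z k.1)
        = margP x {j} (fun k => z k.1) * margP x (Finset.univ.erase j) (fun k => z k.1))
    (u : Finset (Fin d)) (hu : u ⊆ Finset.univ.erase j) :
    uVal x t (insert j u) = uVal x t {j} + uVal x t u := by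
  have hn : (0 : ℝ) < n := by exact_mod_cast t.pos
  have hJ : margP x {j} (fun k => x t k.1) = (cohortN x t {j} : ℝ) / n := by
    rw [cohortN_eq_margP]; field_simp
  have h := cohort_factor x t j hindep u hu
  have h1 : (0 : ℝ) < cohortN x t {j} := by exact_mod_cast cohortN_pos x t {j}
  have h2 : (0 : ℝ) < cohortN x t u := by exact_mod_cast cohortN_pos x t u
  unfold uVal
  rw [h, hJ]
  rw [show (cohortN x t {j} : ℝ) / n * (cohortN x t u) / n
      = ((cohortN x t {j} : ℝ) / n) * ((cohortN x t u : ℝ) / n) by ring]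
  rw [Real.logb_mul (by positivity) (by positivity)]
  ring

/-- under independence the Shapley value of `j` collapses to `val_t({j})`. -/
lemma uShap_eq_uVal (t : Fin n) (j : Fin d)
    (hindep : ∀ z : ∀ k, X k,
      margP x Finset.univ (fun k => z k.1)
        = margP x {j} (fun k => z k.1) * margP x (Finset.univ.erase j) (fun k => z k.1)) :
    uShap x t j = uVal x t {j} := by
  have hd : 0 < d := j.pos
  unfold uShap
  have hstep : ∀ u ∈ ((Finset.univ : Finset (Fin d)).erase j).powerset,
      ((d - 1).choose u.card : ℝ)⁻¹ * (uVal x t (insert j u) - uVal x t u)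
        = ((d - 1).choose u.card : ℝ)⁻¹ * uVal x t {j} := by
    intro u hu
    rw [uVal_insert x t j hindep u (Finset.mem_powerset.mp hu)]
    ring
  rw [Finset.sum_congr rfl hstep, ← Finset.sum_mul]
  have hcard : ((Finset.univ : Finset (Fin d)).erase j).card = d - 1 := by
    rw [Finset.card_erase_of_mem (Finset.mem_univ j), Finset.card_univ, Fintype.card_fin]
  have hsum : ∑ u ∈ ((Finset.univ : Finset (Fin d)).erase j).powerset,
      ((d - 1).choose u.card : ℝ)⁻¹ = d := by
    rw [Finset.sum_powerset_apply_card (fun m => ((d - 1).choose m : ℝ)⁻¹), hcard]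
    rw [Nat.sub_add_cancel hd]
    calc ∑ m ∈ Finset.range d, (d - 1).choose m • ((d - 1).choose m : ℝ)⁻¹
        = ∑ m ∈ Finset.range d, (1 : ℝ) := Finset.sum_congr rfl (fun m hm => by
          rw [Finset.mem_range] at hm
          have hch : 0 < (d - 1).choose m := Nat.choose_pos (by omega)
          rw [nsmul_eq_mul]
          exact mul_inv_cancel₀ (by exact_mod_cast hch.ne'))
      _ = d := by rw [Finset.sum_const, Finset.card_range, nsmul_eq_mul, mul_one]
  rw [hsum]
  have hd' : (d : ℝ) ≠ 0 := Nat.cast_ne_zero.mpr hd.ne'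
  field_simp

end Aux

/-- if variable `j` is independent of the remaining variables under the
empirical distribution, then the global uniqueness Shapley value of variable `j` equals the
marginal empirical entropy of variable `j`. -/
theorem globalUniquenessShapley_eq_entropy_of_indep
    (n d : ℕ) (hn : 1 ≤ n) (hd : 1 ≤ d)
    (X : Fin d → Type) [∀ j, Fintype (X j)] [∀ j, DecidableEq (X j)]
    (x : Fin n → ∀ j, X j) (j : Fin d)
    (hindep : ∀ z : ∀ j, X j,
      margP x Finset.univ (fun k => z k.1)
        = margP x {j} (fun k => z k.1) * margP x (Finset.univ.erase j) (fun k => z k.1)) :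
    uShapGlobal x j = emEnt x {j} := by
  have hn' : (n : ℝ) ≠ 0 := Nat.cast_ne_zero.mpr (by omega)
  unfold uShapGlobal
  rw [Finset.sum_congr rfl (fun t _ => uShap_eq_uVal x t j hindep)]
  have huVal : ∀ t : Fin n,
      uVal x t {j} = -Real.logb 2 (margP x {j} (fun k => x t k.1)) := by
    intro t
    unfold uVal
    rw [cohortN_eq_margP, mul_div_cancel_left₀ _ hn']
  have hfiber : ∀ z : (∀ k : ({j} : Finset (Fin d)), X k.1),
      ((Finset.univ.filter fun t : Fin n =>
        (fun k : ({j} : Finset (Fin d)) => x t k.1) = z).card : ℝ)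
      = n * margP x {j} z := by
    intro z
    have heq : (Finset.univ.filter fun t : Fin n =>
          (fun k : ({j} : Finset (Fin d)) => x t k.1) = z)
        = (Finset.univ.filter fun t : Fin n =>
          ∀ k : ({j} : Finset (Fin d)), x t k.1 = z k) :=
      Finset.filter_congr fun t _ => funext_iff
    rw [heq, margP]
    field_simp
  have key : ∑ t, uVal x t {j}
      = ∑ z : (∀ k : ({j} : Finset (Fin d)), X k.1),
          ((n : ℝ) * margP x {j} z) * (-Real.logb 2 (margP x {j} z)) := by
    rw [← Finset.sum_fiberwise_of_maps_to
      (g := fun t (k : ({j} : Finset (Fin d))) => x t k.1)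
      (t := Finset.univ) (fun t _ => Finset.mem_univ _) (fun t => uVal x t {j})]
    refine Finset.sum_congr rfl fun z _ => ?_
    have hin : ∀ t ∈ Finset.univ.filter (fun t : Fin n =>
        (fun k : ({j} : Finset (Fin d)) => x t k.1) = z),
        uVal x t {j} = -Real.logb 2 (margP x {j} z) := by
      intro t ht
      rw [Finset.mem_filter] at ht
      rw [huVal t, ht.2]
    rw [Finset.sum_congr rfl hin, Finset.sum_const, nsmul_eq_mul, hfiber z]
  rw [key]
  unfold emEnt
  rw [Finset.mul_sum, ← Finset.sum_neg_distrib]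
  refine Finset.sum_congr rfl fun z _ => ?_
  field_simp
end

section
/- Suppose d = 3 and variable 3 duplicates variable 1, i.e., x_{i3} = x_{i1} for all i ∈ {1,…,n} (with 𝒳_3 = 𝒳_1). Then the global uniqueness Shapley value of variable 2 satisfies φ^{1:n}_2 = (1/3)·𝓗({2}) + (2/3)·𝓗({2}|{1}). -/
open Finset

variable {n d : ℕ} {X : Fin d → Type} [∀ j, Fintype (X j)] [∀ j, DecidableEq (X j)]

/-- Auxiliary: if predicates are equivalent, cohorts agree. -/
lemma cohortN_congr (x : Fin n → ∀ j, X j) (t : Fin n) (u v : Finset (Fin d))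
    (h : ∀ i, (∀ j ∈ u, x i j = x t j) ↔ (∀ j ∈ v, x i j = x t j)) :
    cohortN x t u = cohortN x t v := by
  unfold cohortN
  congr 1
  exact Finset.filter_congr fun i _ => h i

lemma uVal_congr (x : Fin n → ∀ j, X j) (t : Fin n) (u v : Finset (Fin d))
    (h : cohortN x t u = cohortN x t v) : uVal x t u = uVal x t v := by
  unfold uVal; rw [h]

/-- Auxiliary: the average of the value function over subjects is the empirical entropy. -/
lemma sum_uVal (hn : n ≠ 0) (x : Fin n → ∀ j, X j) (u : Finset (Fin d)) :
    ∑ t, uVal x t u = n * emEnt x u := by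
  classical
  set c : (∀ j : u, X j.1) → ℕ :=
    fun z => (Finset.univ.filter fun i : Fin n => ∀ j : u, x i j.1 = z j).card with hc
  have hcohort : ∀ t : Fin n, cohortN x t u = c (fun j : u => x t j.1) := by
    intro t
    unfold cohortN
    rw [hc]
    congr 1
    apply Finset.filter_congr
    intro i _
    simp [Subtype.forall]
  have hfiber : ∀ z : (∀ j : u, X j.1),
      (Finset.univ.filter fun t : Fin n => (fun j : u => x t j.1) = z).card = c z := by
    intro z
    rw [hc]
    congr 1
    apply Finset.filter_congr
    intro i _
    simp [funext_iff]
  have key : ∑ t, uVal x t u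
      = ∑ z : (∀ j : u, X j.1), -((c z : ℝ) * Real.logb 2 ((c z : ℝ) / n)) := by
    have := Finset.sum_fiberwise' (Finset.univ : Finset (Fin n))
      (fun t => (fun j : u => x t j.1))
      (fun z : (∀ j : u, X j.1) => -Real.logb 2 ((c z : ℝ) / n))
    rw [show ∑ t, uVal x t u = ∑ t, -Real.logb 2 ((c (fun j : u => x t j.1) : ℝ) / n) from
      Finset.sum_congr rfl fun t _ => by rw [uVal, hcohort t], ← this]
    refine Finset.sum_congr rfl fun z _ => ?_
    rw [Finset.sum_const, hfiber z, nsmul_eq_mul]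
    ring
  have hm : ∀ z : (∀ j : u, X j.1), margP x u z = (c z : ℝ) / n := fun z => rfl
  have hnR : (n : ℝ) ≠ 0 := Nat.cast_ne_zero.mpr hn
  rw [key, emEnt, mul_neg, Finset.mul_sum, ← Finset.sum_neg_distrib]
  refine Finset.sum_congr rfl fun z _ => ?_
  rw [hm z]
  field_simp

/-- with `d = 3` and variable `3` (index `2`) duplicating variable `1`
(index `0`), the global uniqueness Shapley value of variable `2` (index `1`) is
`(1/3)𝓗({2}) + (2/3)𝓗({2}|{1})`. -/
theorem globalUniquenessShapley_duplicate_var2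
    (n : ℕ) (hn : 1 ≤ n)
    (X : Fin 3 → Type) [∀ j, Fintype (X j)] [∀ j, DecidableEq (X j)]
    (hX : X 2 = X 0)
    (x : Fin n → ∀ j, X j)
    (hdup : ∀ i, x i 2 = cast hX.symm (x i 0)) :
    uShapGlobal x 1
      = (1 / 3) * emEnt x {1} + (2 / 3) * (emEnt x {0, 1} - emEnt x {0}) := by
  have hn0 : n ≠ 0 := Nat.one_le_iff_ne_zero.mp hn
  have hnR : (n : ℝ) ≠ 0 := Nat.cast_ne_zero.mpr hn0
  have h02 : ∀ i i' : Fin n, x i 2 = x i' 2 ↔ x i 0 = x i' 0 := by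
    intro i i'
    rw [hdup i, hdup i', cast_inj]
  -- cohort/uVal identifications
  have hv2 : ∀ t, uVal x t {2} = uVal x t {0} := fun t =>
    uVal_congr x t _ _ (cohortN_congr x t _ _ (by intro i; simp [h02 i t]))
  have hv02 : ∀ t, uVal x t {0, 2} = uVal x t {0} := fun t =>
    uVal_congr x t _ _ (cohortN_congr x t _ _ (by
      intro i
      constructor
      · intro h j hj
        simp only [Finset.mem_singleton] at hj
        subst hj
        exact h 0 (by decide)
      · intro h j hj
        fin_cases hj
        · exact h 0 (by decide)
        · exact (h02 i t).mpr (h 0 (by decide))))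
  have hv12 : ∀ t, uVal x t {1, 2} = uVal x t {0, 1} := fun t =>
    uVal_congr x t _ _ (cohortN_congr x t _ _ (by
      intro i
      constructor
      · intro h j hj
        fin_cases hj
        · exact (h02 i t).mp (h 2 (by decide))
        · exact h 1 (by decide)
      · intro h j hj
        fin_cases hj
        · exact h 1 (by decide)
        · exact (h02 i t).mpr (h 0 (by decide))))
  have hv012 : ∀ t, uVal x t {0, 1, 2} = uVal x t {0, 1} := fun t =>
    uVal_congr x t _ _ (cohortN_congr x t _ _ (by
      intro i
      constructor
      · intro h j hj
        fin_cases hj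
        · exact h 0 (by decide)
        · exact h 1 (by decide)
      · intro h j hj
        fin_cases hj
        · exact h 0 (by decide)
        · exact h 1 (by decide)
        · exact (h02 i t).mpr (h 0 (by decide))))
  have hvE : ∀ t, uVal x t (∅ : Finset (Fin 3)) = 0 := by
    intro t
    have : cohortN x t (∅ : Finset (Fin 3)) = n := by
      unfold cohortN
      simp
    rw [uVal, this, div_self hnR, Real.logb_one, neg_zero]
  -- expand the Shapley sum
  have hps : (((Finset.univ : Finset (Fin 3)).erase 1).powerset : Finset (Finset (Fin 3)))
      = {∅, {0}, {2}, {0, 2}} := by decide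
  have hshap : ∀ t, uShap x t 1
      = (3 : ℝ)⁻¹ * ((uVal x t {1}) + 2 * (uVal x t {0, 1} - uVal x t {0})) := by
    intro t
    rw [uShap, hps]
    rw [Finset.sum_insert (by decide), Finset.sum_insert (by decide),
      Finset.sum_insert (by decide), Finset.sum_singleton]
    have e1 : insert (1 : Fin 3) (∅ : Finset (Fin 3)) = {1} := by decide
    have e2 : insert (1 : Fin 3) ({0} : Finset (Fin 3)) = {0, 1} := by decide
    have e3 : insert (1 : Fin 3) ({2} : Finset (Fin 3)) = {1, 2} := by decide
    have e4 : insert (1 : Fin 3) ({0, 2} : Finset (Fin 3)) = {0, 1, 2} := by decide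
    rw [e1, e2, e3, e4, hv2 t, hv12 t, hv02 t, hv012 t, hvE t,
      show (({0, 2} : Finset (Fin 3))).card = 2 from by decide,
      show (({0} : Finset (Fin 3))).card = 1 from by decide,
      show (({2} : Finset (Fin 3))).card = 1 from by decide,
      show ((∅ : Finset (Fin 3))).card = 0 from by decide]
    norm_num
    ring
  -- sum over t
  rw [uShapGlobal]
  rw [Finset.sum_congr rfl fun t _ => hshap t]
  rw [← Finset.mul_sum, Finset.sum_add_distrib, ← Finset.mul_sum,
    Finset.sum_sub_distrib, sum_uVal hn0 x {1}, sum_uVal hn0 x {0, 1}, sum_uVal hn0 x {0}]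
  field_simp
end
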